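/- All roots of the polynomial p_δ(x), defined by p_1(x)=1−2x, p_2(x)=1−3x, p_δ(x)=p_{δ−1}(x)−x·p_{δ−2}(x), are real and strictly greater than 1/4. -/

import Mathlib

open Polynomial

/-- All (complex) roots of `p_δ` are real and strictly greater than `1/4`. -/
theorem char_poly_roots_real_gt (p : ℕ → Polynomial ℂ)
    (h1 : p 1 = 1 - 2 * X) (h2 : p 2 = 1 - 3 * X)
    (hrec : ∀ δ, 3 ≤ δ → p δ = p (δ - 1) - X * p (δ - 2))
    (δ : ℕ) (hδ : 1 ≤ δ) :
    ∀ z : ℂ, (p δ).eval z = 0 → ∃ r : ℝ, z = (r : ℂ) ∧ 1 / 4 < r := by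
  intro z hz
  obtain ⟨w, hw2⟩ : ∃ w : ℂ, w ^ 2 = 1 - 4 * z :=
    ⟨(1 - 4 * z) ^ ((2 : ℂ)⁻¹), by
      exact_mod_cast Complex.cpow_nat_inv_pow (1 - 4 * z) two_ne_zero⟩
  set u : ℂ := (1 + w) / 2 with hu
  set v : ℂ := (1 - w) / 2 with hv
  have huv1 : u + v = 1 := by rw [hu, hv]; ring
  have huv2 : u * v = z := by
    rw [hu, hv]; linear_combination (-(1 : ℂ)/4) * hw2
  have key : ∀ n, 1 ≤ n → (p n).eval z = u ^ (n + 1) + v ^ (n + 1) := by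
    intro n
    induction n using Nat.strong_induction_on with
    | _ n ih =>
      intro hn
      match n, hn with
      | 1, _ =>
        rw [h1]; simp only [eval_sub, eval_one, eval_mul, eval_ofNat, eval_X]
        rw [hu, hv]; linear_combination (-(1 : ℂ)/2) * hw2
      | 2, _ =>
        rw [h2]; simp only [eval_sub, eval_one, eval_mul, eval_ofNat, eval_X]
        rw [hu, hv]; linear_combination (-(3 : ℂ)/4) * hw2
      | (m + 3), _ =>
        rw [hrec (m + 3) (by omega)]
        simp only [eval_sub, eval_mul, eval_X]
        have e1 : m + 3 - 1 = m + 2 := by omega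
        have e2 : m + 3 - 2 = m + 1 := by omega
        rw [e1, e2, ih (m + 2) (by omega) (by omega), ih (m + 1) (by omega) (by omega)]
        linear_combination -(u ^ (m + 3) + v ^ (m + 3)) * huv1 +
          (u ^ (m + 2) + v ^ (m + 2)) * huv2
  have hsum : u ^ (δ + 1) + v ^ (δ + 1) = 0 := by rw [← key δ hδ]; exact hz
  have habs : ‖u‖ = ‖v‖ := by
    have h1' : u ^ (δ + 1) = -v ^ (δ + 1) := by linear_combination hsum
    have : ‖u‖ ^ (δ + 1) = ‖v‖ ^ (δ + 1) := by
      rw [← norm_pow, ← norm_pow, h1', norm_neg]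
    exact (pow_left_inj₀ (norm_nonneg u) (norm_nonneg v) (by omega)).mp this
  have hre : w.re = 0 := by
    have habs' : ‖1 + w‖ = ‖1 - w‖ := by
      have := habs
      rw [hu, hv, norm_div, norm_div] at this
      have h2ne : ‖(2 : ℂ)‖ ≠ 0 := by simp
      field_simp at this
      exact this
    have h2' : Complex.normSq (1 + w) = Complex.normSq (1 - w) := by
      rw [← Complex.sq_norm, ← Complex.sq_norm, habs']
    simp only [Complex.normSq_apply, Complex.add_re, Complex.add_im, Complex.sub_re,
      Complex.sub_im, Complex.one_re, Complex.one_im] at h2'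
    nlinarith [h2']
  have hwim : w = (w.im : ℂ) * Complex.I := by
    apply Complex.ext <;> simp [hre]
  have hwsq : w ^ 2 = -((w.im : ℂ) ^ 2) := by
    conv_lhs => rw [hwim]
    rw [mul_pow, Complex.I_sq]; ring
  have ht : w.im ≠ 0 := by
    intro h0
    have hw0 : w = 0 := by rw [hwim, h0]; simp
    have hz4 : z = 1 / 4 := by
      rw [hw0] at hw2; linear_combination ((1 : ℂ)/4) * hw2
    have hu2 : u = 1 / 2 := by rw [hu, hw0]; ring
    have hv2 : v = 1 / 2 := by rw [hv, hw0]; ring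
    rw [hu2, hv2] at hsum
    have : ((1 : ℂ) / 2) ^ (δ + 1) ≠ 0 := pow_ne_zero _ (by norm_num)
    have h2z : (2 : ℂ) * ((1 : ℂ) / 2) ^ (δ + 1) = 0 := by linear_combination hsum
    simp [this] at h2z
  refine ⟨(1 + w.im ^ 2) / 4, ?_, ?_⟩
  · have : (4 : ℂ) * z = 1 + (w.im : ℂ) ^ 2 := by
      linear_combination hw2 - hwsq
    push_cast
    linear_combination (1 / 4 : ℂ) * this
  · have : 0 < w.im ^ 2 := pow_pos (abs_pos.mpr ht) 2 |>.trans_le (by rw [sq_abs])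
    linarith
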